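/- Let (x^H, x^A) be a feasible path flow pattern with aggregated link flow f = Δ(x^H + x^A), and assume each t_a is continuously differentiable. Then the following are equivalent: (i) for every pair of paths p, q ∈ 𝓟: if x_p^H > 0 then C_q^H(f) ≥ C_p^H(f), and if x_p^A > 0 then the right-hand derivative at ε = 0 of the map ε ↦ S(Δ(x^H + x^A + ε(e_q − e_p))) is nonnegative (here e_p, e_q are the standard basis vectors of ℝ^𝓟); (ii) there exist λ^H, λ^A ∈ ℝ such that for every path p ∈ 𝓟, C_p^H(f) ≥ λ^H with equality whenever x_p^H > 0, and C_p^A(f) ≥ λ^A with equality whenever x_p^A > 0. -/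

import Mathlib

open scoped BigOperators

/-- Aggregated link flow `f = Δ x`. -/
noncomputable def aggFlow {L P : Type*} [Fintype P] (Δ : L → P → ℝ) (x : P → ℝ) : L → ℝ :=
  fun a => ∑ p, Δ a p * x p

/-- Human path cost `C_p^H(f) = Σ_a Δ_{ap} t_a(f_a)`. -/
noncomputable def CH {L P : Type*} [Fintype L] (Δ : L → P → ℝ) (t : L → ℝ → ℝ)
    (f : L → ℝ) (p : P) : ℝ :=
  ∑ a, Δ a p * t a (f a)

/-- Autonomous (marginal social) path cost
`C_p^A(f) = Σ_a Δ_{ap} (t_a(f_a) + f_a t_a'(f_a))`. -/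
noncomputable def CA {L P : Type*} [Fintype L] (Δ : L → P → ℝ) (t : L → ℝ → ℝ)
    (f : L → ℝ) (p : P) : ℝ :=
  ∑ a, Δ a p * (t a (f a) + f a * deriv (t a) (f a))

/-- Social cost `S(f) = Σ_a f_a t_a(f_a)`. -/
noncomputable def Scost {L : Type*} [Fintype L] (t : L → ℝ → ℝ) (f : L → ℝ) : ℝ :=
  ∑ a, f a * t a (f a)


/-- The right-hand derivative of the social cost along a swap of flow from
path `p` to path `q` equals `C_q^A(f) - C_p^A(f)`. -/
lemma derivWithin_swap {L P : Type*} [Fintype L] [Fintype P] [DecidableEq P]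
    (Δ : L → P → ℝ) (t : L → ℝ → ℝ) (ht : ∀ a, ContDiff ℝ 1 (t a))
    (xH xA : P → ℝ) (p q : P) :
    derivWithin
        (fun ε : ℝ => Scost t (aggFlow Δ
          (fun r => xH r + xA r +
            ε * ((Pi.single q 1 : P → ℝ) r - (Pi.single p 1 : P → ℝ) r))))
        (Set.Ici (0:ℝ)) 0 =
      CA Δ t (aggFlow Δ (fun r => xH r + xA r)) q -
        CA Δ t (aggFlow Δ (fun r => xH r + xA r)) p := by
  set f : L → ℝ := aggFlow Δ (fun r => xH r + xA r) with hf
  set d : L → ℝ := fun a => Δ a q - Δ a p with hd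
  have key : ∀ (ε : ℝ) (a : L), aggFlow Δ
      (fun r => xH r + xA r +
        ε * ((Pi.single q 1 : P → ℝ) r - (Pi.single p 1 : P → ℝ) r)) a
      = f a + ε * d a := by
    intro ε a
    simp only [aggFlow, hf, mul_add, Finset.sum_add_distrib]
    congr 1
    simp [Pi.single_apply, mul_sub, mul_ite, Finset.sum_sub_distrib, Finset.sum_ite_eq', hd]
    ring
  have hder : HasDerivAt
      (fun ε : ℝ => Scost t (aggFlow Δ
        (fun r => xH r + xA r +
          ε * ((Pi.single q 1 : P → ℝ) r - (Pi.single p 1 : P → ℝ) r))))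
      (CA Δ t f q - CA Δ t f p) 0 := by
    have hfun : (fun ε : ℝ => Scost t (aggFlow Δ
        (fun r => xH r + xA r +
          ε * ((Pi.single q 1 : P → ℝ) r - (Pi.single p 1 : P → ℝ) r))))
        = fun ε : ℝ => ∑ a, (f a + ε * d a) * t a (f a + ε * d a) := by
      funext ε
      simp only [Scost, key]
    rw [hfun]
    have hsum : HasDerivAt (fun ε : ℝ => ∑ a, (f a + ε * d a) * t a (f a + ε * d a))
        (∑ a, (d a * t a (f a) + f a * (deriv (t a) (f a) * d a))) 0 := by
      apply HasDerivAt.fun_sum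
      intro a _
      have hu : HasDerivAt (fun ε : ℝ => f a + ε * d a) (d a) 0 := by
        simpa using (hasDerivAt_mul_const (d a) (x := (0:ℝ))).const_add (f a)
      have htd : HasDerivAt (t a) (deriv (t a) (f a)) (f a + 0 * d a) := by
        simpa using (((ht a).differentiable one_ne_zero) (f a)).hasDerivAt
      have hc := htd.comp 0 hu
      simpa using hu.fun_mul hc
    convert hsum using 1
    simp only [CA]
    rw [← Finset.sum_sub_distrib]
    refine Finset.sum_congr rfl fun a _ => ?_
    simp only [hd]
    ring
  rw [hder.hasDerivWithinAt.derivWithin (uniqueDiffOn_Ici 0 0 Set.self_mem_Ici)]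

/-- Theorem 1: for a feasible path flow pattern `(x^H, x^A)` with aggregated
link flow `f = Δ(x^H + x^A)`, the local-deviation equilibrium conditions (for
human agents in terms of travel times, and for autonomous agents in terms of the
right-hand derivative of the social cost along a swap of flow from path `p` to
path `q`) are equivalent to the Wardrop-like conditions with multipliers
`λ^H, λ^A`. -/
theorem deviation_iff_wardrop {L P : Type*} [Fintype L] [Fintype P] [Nonempty P]
    [DecidableEq P]
    (Δ : L → P → ℝ) (hΔ : ∀ a p, Δ a p = 0 ∨ Δ a p = 1)
    (t : L → ℝ → ℝ) (ht : ∀ a, ContDiff ℝ 1 (t a))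
    (α : ℝ) (hα : α ∈ Set.Icc (0:ℝ) 1)
    (xH xA : P → ℝ) (hxH : ∀ p, 0 ≤ xH p) (hxA : ∀ p, 0 ≤ xA p)
    (hdemH : ∑ p, xH p = 1 - α) (hdemA : ∑ p, xA p = α) :
    (∀ p q : P,
        (0 < xH p →
          CH Δ t (aggFlow Δ (fun r => xH r + xA r)) p ≤
            CH Δ t (aggFlow Δ (fun r => xH r + xA r)) q) ∧
        (0 < xA p →
          0 ≤ derivWithin
            (fun ε : ℝ => Scost t (aggFlow Δ
              (fun r => xH r + xA r +
                ε * ((Pi.single q 1 : P → ℝ) r - (Pi.single p 1 : P → ℝ) r))))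
            (Set.Ici (0:ℝ)) 0)) ↔
    (∃ lamH lamA : ℝ, ∀ p : P,
        (lamH ≤ CH Δ t (aggFlow Δ (fun r => xH r + xA r)) p ∧
          (0 < xH p → CH Δ t (aggFlow Δ (fun r => xH r + xA r)) p = lamH)) ∧
        (lamA ≤ CA Δ t (aggFlow Δ (fun r => xH r + xA r)) p ∧
          (0 < xA p → CA Δ t (aggFlow Δ (fun r => xH r + xA r)) p = lamA))) := by
  set f : L → ℝ := aggFlow Δ (fun r => xH r + xA r) with hf
  constructor
  · intro h
    refine ⟨Finset.univ.inf' Finset.univ_nonempty (CH Δ t f),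
      Finset.univ.inf' Finset.univ_nonempty (CA Δ t f), fun p => ?_⟩
    constructor
    · refine ⟨Finset.inf'_le _ (Finset.mem_univ p), fun hp => ?_⟩
      refine le_antisymm ?_ (Finset.inf'_le _ (Finset.mem_univ p))
      exact Finset.le_inf' _ _ fun q _ => (h p q).1 hp
    · refine ⟨Finset.inf'_le _ (Finset.mem_univ p), fun hp => ?_⟩
      refine le_antisymm ?_ (Finset.inf'_le _ (Finset.mem_univ p))
      refine Finset.le_inf' _ _ fun q _ => ?_
      have := (h p q).2 hp
      rw [derivWithin_swap Δ t ht xH xA p q] at this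
      linarith
  · rintro ⟨lamH, lamA, hlam⟩ p q
    constructor
    · intro hp
      calc CH Δ t f p = lamH := (hlam p).1.2 hp
        _ ≤ CH Δ t f q := (hlam q).1.1
    · intro hp
      rw [derivWithin_swap Δ t ht xH xA p q]
      have h1 : CA Δ t f p = lamA := (hlam p).2.2 hp
      have h2 : lamA ≤ CA Δ t f q := (hlam q).2.1
      linarith
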